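/- Let $\mu, \nu$ be probability measures on a measurable space $\mathcal{X}$, let $\mathcal{Y}$ be a standard Borel space (or more generally one where disintegration applies), and let $\kappa : \mathcal{X} \rightsquigarrow \mathcal{Y}$ be a Markov kernel. Then the Kullback-Leibler divergence satisfies the data-processing inequality $\mathrm{KL}(\kappa \circ_m \mu, \kappa \circ_m \nu) \le \mathrm{KL}(\mu, \nu)$. -/

import Mathlib

open MeasureTheory ProbabilityTheory
open scoped ENNReal Classical

section Aux

variable {𝓧 𝓨 : Type*} [MeasurableSpace 𝓧] [MeasurableSpace 𝓨]


lemma bind_univ (μ : Measure 𝓧) [IsProbabilityMeasure μ] (κ : Kernel 𝓧 𝓨) [IsMarkovKernel κ] :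
    (μ.bind ⇑κ) Set.univ = 1 := by
  rw [Measure.bind_apply MeasurableSet.univ κ.measurable.aemeasurable]
  simp

lemma bind_eq_snd_compProd (μ : Measure 𝓧) [SFinite μ] (κ : Kernel 𝓧 𝓨) [IsSFiniteKernel κ] :
    μ.bind ⇑κ = (μ ⊗ₘ κ).snd := by
  ext s hs
  rw [Measure.bind_apply hs κ.measurable.aemeasurable, Measure.snd, Measure.map_apply measurable_snd hs,
    Measure.compProd_apply (measurable_snd hs)]
  rfl

lemma bind_absCont {μ ν : Measure 𝓧} [SFinite ν] (h : μ ≪ ν) (κ : Kernel 𝓧 𝓨) :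
    μ.bind ⇑κ ≪ ν.bind ⇑κ := by
  refine Measure.AbsolutelyContinuous.mk fun s hsm hs ↦ ?_
  rw [Measure.bind_apply hsm κ.measurable.aemeasurable] at hs ⊢
  have h0 : ∀ᵐ x ∂ν, κ x s = 0 := by
    rwa [lintegral_eq_zero_iff (κ.measurable_coe hsm)] at hs
  rw [lintegral_eq_zero_iff (κ.measurable_coe hsm)]
  exact h.ae_le h0

lemma compProd_withDensity (ν : Measure 𝓧) [SFinite ν] (κ : Kernel 𝓧 𝓨) [IsSFiniteKernel κ]
    {f : 𝓧 → ℝ≥0∞} (hf : Measurable f) :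
    (ν.withDensity f) ⊗ₘ κ = (ν ⊗ₘ κ).withDensity (fun z ↦ f z.1) := by
  ext s hs
  rw [Measure.compProd_apply hs, withDensity_apply _ hs,
    lintegral_withDensity_eq_lintegral_mul ν hf (Kernel.measurable_kernel_prodMk_left hs)]
  have hm : Measurable (s.indicator fun z : 𝓧 × 𝓨 ↦ f z.1) :=
    Measurable.indicator (hf.comp measurable_fst) hs
  rw [← lintegral_indicator hs, Measure.lintegral_compProd hm]
  congr 1 with x
  have : ∀ y, s.indicator (fun z : 𝓧 × 𝓨 ↦ f z.1) (x, y)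
      = (Prod.mk x ⁻¹' s).indicator (fun _ ↦ f x) y := by
    intro y
    by_cases hy : (x, y) ∈ s <;> simp [Set.indicator, hy]
  simp_rw [this]
  rw [lintegral_indicator (measurable_prodMk_left hs), setLIntegral_const]
  simp [mul_comm]

lemma integrable_min_log_rnDeriv {ρ ξ : Measure 𝓨} [IsProbabilityMeasure ρ]
    [IsProbabilityMeasure ξ] (h : ρ ≪ ξ) :
    Integrable (fun y ↦ min (Real.log (ρ.rnDeriv ξ y).toReal) 0) ρ := by
  set q := ρ.rnDeriv ξ with hq
  have hqm : Measurable q := Measure.measurable_rnDeriv _ _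
  have hm : Measurable fun y ↦ min (Real.log (q y).toReal) 0 :=
    (Real.measurable_log.comp hqm.ennreal_toReal).min measurable_const
  refine ⟨hm.aestronglyMeasurable, ?_⟩
  have hbound : ∀ y, q y * (‖min (Real.log (q y).toReal) 0‖₊ : ℝ≥0∞) ≤ 1 := by
    intro y
    set t := q y
    rcases le_or_gt 1 t.toReal with hx | hx
    · have : min (Real.log t.toReal) 0 = 0 := min_eq_right (Real.log_nonneg hx)
      simp [this]
    rcases eq_or_lt_of_le (ENNReal.toReal_nonneg (a := t)) with hx0 | hx0
    · have : min (Real.log t.toReal) 0 = 0 := by rw [← hx0]; simp [Real.log_zero]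
      simp [this]
    · have ht : t ≠ ⊤ := by
        intro hT; rw [hT] at hx0; simp at hx0
      have hlog : Real.log t.toReal ≤ 0 := Real.log_nonpos (le_of_lt hx0) (le_of_lt hx)
      have hmin : min (Real.log t.toReal) 0 = Real.log t.toReal := min_eq_left hlog
      rw [hmin, ← enorm_eq_nnnorm, Real.enorm_eq_ofReal_abs, abs_of_nonpos hlog, ← ENNReal.ofReal_toReal ht,
        ← ENNReal.ofReal_mul ENNReal.toReal_nonneg]
      refine ENNReal.ofReal_le_of_le_toReal ?_
      rw [ENNReal.toReal_one, ENNReal.toReal_ofReal ENNReal.toReal_nonneg]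
      have h1 : -Real.log t.toReal ≤ (t.toReal)⁻¹ - 1 := by
        rw [← Real.log_inv]
        exact Real.log_le_sub_one_of_pos (by positivity)
      have h2 : t.toReal * -Real.log t.toReal ≤ t.toReal * ((t.toReal)⁻¹ - 1) :=
        mul_le_mul_of_nonneg_left h1 ENNReal.toReal_nonneg
      have h3 : t.toReal * ((t.toReal)⁻¹ - 1) = 1 - t.toReal := by
        field_simp
      nlinarith [ENNReal.toReal_nonneg (a := t)]
  calc ∫⁻ y, ‖min (Real.log (q y).toReal) 0‖₊ ∂ρ
      = ∫⁻ y, q y * ‖min (Real.log (q y).toReal) 0‖₊ ∂ξ := by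
        conv_lhs => rw [← Measure.withDensity_rnDeriv_eq ρ ξ h]
        rw [lintegral_withDensity_eq_lintegral_mul _ hqm (by fun_prop)]
        simp only [Pi.mul_apply]
    _ ≤ ∫⁻ _, 1 ∂ξ := lintegral_mono hbound
    _ = 1 := by simp
    _ < ⊤ := ENNReal.one_lt_top

end Aux

/-- Kullback-Leibler divergence between two measures: `KL(μ, ν) = ∫ log (dμ/dν) dμ` (a value in
`ℝ≥0∞`) if `μ` is absolutely continuous with respect to `ν` (and the integral is well defined),
and `∞` otherwise. -/
noncomputable def klDiv {𝓧 : Type*} [MeasurableSpace 𝓧] (μ ν : Measure 𝓧) : ℝ≥0∞ :=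
  if μ ≪ ν ∧ Integrable (fun x ↦ Real.log (μ.rnDeriv ν x).toReal) μ then
    ENNReal.ofReal (∫ x, Real.log (μ.rnDeriv ν x).toReal ∂μ)
  else ∞

/-- **Data-processing inequality for the Kullback-Leibler divergence.** For probability
measures `μ, ν` on `𝓧`, a standard Borel space `𝓨` and a Markov kernel `κ : 𝓧 ↝ 𝓨`,
`KL(κ ∘ₘ μ, κ ∘ₘ ν) ≤ KL(μ, ν)`, where `κ ∘ₘ μ = μ.bind κ`. -/
theorem klDiv_comp_le
    {𝓧 𝓨 : Type*} [MeasurableSpace 𝓧] [MeasurableSpace 𝓨]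
    [StandardBorelSpace 𝓨] [Nonempty 𝓨]
    (μ ν : Measure 𝓧) [IsProbabilityMeasure μ] [IsProbabilityMeasure ν]
    (κ : Kernel 𝓧 𝓨) [IsMarkovKernel κ] :
    klDiv (μ.bind κ) (ν.bind κ) ≤ klDiv μ ν := by
  by_cases h : μ ≪ ν ∧ Integrable (fun x ↦ Real.log (μ.rnDeriv ν x).toReal) μ
  swap
  · simp only [klDiv, if_neg h]; exact le_top
  obtain ⟨hac, hint⟩ := h
  have hprobμ' : IsProbabilityMeasure (μ.bind ⇑κ) := ⟨bind_univ μ κ⟩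
  have hprobν' : IsProbabilityMeasure (ν.bind ⇑κ) := ⟨bind_univ ν κ⟩
  have hac' : μ.bind ⇑κ ≪ ν.bind ⇑κ := bind_absCont hac κ
  set μ' := μ.bind ⇑κ with hμ'def
  set ν' := ν.bind ⇑κ with hν'def
  set p := μ.rnDeriv ν with hp
  set q := μ'.rnDeriv ν' with hqdef
  have hpm : Measurable p := Measure.measurable_rnDeriv _ _
  have hqm : Measurable q := Measure.measurable_rnDeriv _ _
  set P := μ ⊗ₘ κ with hPdef
  set Q := ν ⊗ₘ κ with hQdef
  have hPsnd : P.snd = μ' := (bind_eq_snd_compProd μ κ).symm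
  have hQsnd : Q.snd = ν' := (bind_eq_snd_compProd ν κ).symm
  have hPfst : P.fst = μ := Measure.fst_compProd μ κ
  have hPQ : P = Q.withDensity (fun z ↦ p z.1) := by
    rw [hPdef, hQdef, ← compProd_withDensity ν κ hpm, Measure.withDensity_rnDeriv_eq μ ν hac]
  set b : 𝓧 × 𝓨 → ℝ := fun z ↦ Real.log (p z.1).toReal with hb
  set a : 𝓧 × 𝓨 → ℝ := fun z ↦ Real.log (q z.2).toReal with ha
  set g : 𝓧 × 𝓨 → ℝ := fun z ↦ (q z.2).toReal / (p z.1).toReal with hg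
  have ham : Measurable a := Real.measurable_log.comp (hqm.comp measurable_snd).ennreal_toReal
  have hbm : Measurable b := Real.measurable_log.comp (hpm.comp measurable_fst).ennreal_toReal
  have hgm : Measurable g :=
    ((hqm.comp measurable_snd).ennreal_toReal).div ((hpm.comp measurable_fst).ennreal_toReal)
  have hgnn : ∀ z, 0 ≤ g z := fun z ↦ div_nonneg ENNReal.toReal_nonneg ENNReal.toReal_nonneg
  have hglint : ∫⁻ z, ENNReal.ofReal (g z) ∂P ≤ 1 := by
    have hpc : Measurable fun z : 𝓧 × 𝓨 ↦ p z.1 := hpm.comp measurable_fst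
    rw [hPQ, lintegral_withDensity_eq_lintegral_mul _ hpc hgm.ennreal_ofReal]
    have hpt : ∀ z : 𝓧 × 𝓨, ((fun z : 𝓧 × 𝓨 ↦ p z.1) * fun z : 𝓧 × 𝓨 ↦ ENNReal.ofReal (g z)) z ≤ q z.2 := by
      intro z
      simp only [Pi.mul_apply]
      rcases eq_or_ne (p z.1) 0 with h0 | h0
      · simp [h0]
      rcases eq_or_ne (p z.1) ⊤ with hT | hT
      · simp [hg, hT]
      rcases eq_or_ne (q z.2) ⊤ with hqT | hqT
      · exact hqT ▸ le_top
      · have hpt0 : 0 < (p z.1).toReal := ENNReal.toReal_pos h0 hT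
        rw [hg]
        dsimp only
        rw [ENNReal.ofReal_div_of_pos hpt0, ENNReal.ofReal_toReal hqT, ENNReal.ofReal_toReal hT,
          mul_comm, ENNReal.div_mul_cancel h0 hT]
    calc ∫⁻ z, ((fun z : 𝓧 × 𝓨 ↦ p z.1) * fun z : 𝓧 × 𝓨 ↦ ENNReal.ofReal (g z)) z ∂Q
        ≤ ∫⁻ z, q z.2 ∂Q := lintegral_mono hpt
      _ = ∫⁻ y, q y ∂ν' := by rw [← hQsnd, Measure.snd, lintegral_map hqm measurable_snd]
      _ = μ' Set.univ := Measure.lintegral_rnDeriv hac'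
      _ = 1 := measure_univ
  have hgint : Integrable g P := by
    refine ⟨hgm.aestronglyMeasurable, ?_⟩
    have : ∫⁻ z, ‖g z‖ₑ ∂P = ∫⁻ z, ENNReal.ofReal (g z) ∂P :=
      lintegral_congr fun z ↦ Real.enorm_eq_ofReal (hgnn z)
    rw [HasFiniteIntegral, this]
    exact hglint.trans_lt ENNReal.one_lt_top
  have hgival : ∫ z, g z ∂P ≤ 1 := by
    rw [integral_eq_lintegral_of_nonneg_ae (.of_forall hgnn) hgm.aestronglyMeasurable]
    calc (∫⁻ z, ENNReal.ofReal (g z) ∂P).toReal ≤ (1 : ℝ≥0∞).toReal :=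
          ENNReal.toReal_mono ENNReal.one_ne_top hglint
      _ = 1 := ENNReal.toReal_one
  have hbint : Integrable b P := by
    have h1 := hint
    rw [← hPfst, Measure.fst] at h1
    exact (integrable_map_measure
      (Real.measurable_log.comp hpm.ennreal_toReal).aestronglyMeasurable
      measurable_fst.aemeasurable).mp h1
  have hφm : Measurable fun y ↦ min (Real.log (q y).toReal) 0 :=
    (Real.measurable_log.comp hqm.ennreal_toReal).min measurable_const
  have hφ : Integrable (fun z : 𝓧 × 𝓨 ↦ min (a z) 0) P := by
    have h1 : Integrable (fun y ↦ min (Real.log (q y).toReal) 0) μ' :=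
      integrable_min_log_rnDeriv hac'
    rw [← hPsnd, Measure.snd] at h1
    exact (integrable_map_measure hφm.aestronglyMeasurable measurable_snd.aemeasurable).mp h1
  have hae : ∀ᵐ z ∂P, a z ≤ b z + (g z - 1) := by
    have hpq1 : ∀ᵐ x ∂μ, 0 < p x ∧ p x < ⊤ :=
      (Measure.rnDeriv_pos hac).and (hac.ae_le (Measure.rnDeriv_lt_top μ ν))
    have hq1 : ∀ᵐ y ∂μ', 0 < q y ∧ q y < ⊤ :=
      (Measure.rnDeriv_pos hac').and (hac'.ae_le (Measure.rnDeriv_lt_top μ' ν'))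
    have hmp : MeasurableSet {x | 0 < p x ∧ p x < ⊤} := hpm measurableSet_Ioo
    have hmq : MeasurableSet {y | 0 < q y ∧ q y < ⊤} := hqm measurableSet_Ioo
    have hPp : ∀ᵐ z ∂P, 0 < p z.1 ∧ p z.1 < ⊤ := by
      rw [← hPfst, Measure.fst] at hpq1
      exact (ae_map_iff measurable_fst.aemeasurable hmp).mp hpq1
    have hPq : ∀ᵐ z ∂P, 0 < q z.2 ∧ q z.2 < ⊤ := by
      rw [← hPsnd, Measure.snd] at hq1
      exact (ae_map_iff measurable_snd.aemeasurable hmq).mp hq1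
    filter_upwards [hPp, hPq] with z hz1 hz2
    obtain ⟨hp0, hpT⟩ := hz1
    obtain ⟨hq0, hqT⟩ := hz2
    have hptR : 0 < (p z.1).toReal := ENNReal.toReal_pos hp0.ne' hpT.ne
    have hqtR : 0 < (q z.2).toReal := ENNReal.toReal_pos hq0.ne' hqT.ne
    have hgz : 0 < g z := div_pos hqtR hptR
    have hlog : a z = b z + Real.log (g z) := by
      rw [hb, ha, hg]
      dsimp only
      rw [Real.log_div hqtR.ne' hptR.ne']
      ring
    have := Real.log_le_sub_one_of_pos hgz
    linarith
  have haint : Integrable a P := by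
    refine Integrable.mono' (hbint.abs.add (hgint.add hφ.abs)) ham.aestronglyMeasurable ?_
    filter_upwards [hae] with z hz
    rw [Real.norm_eq_abs]
    rcases le_or_gt 0 (a z) with h0 | h0
    · rw [abs_of_nonneg h0]
      have h1 := le_abs_self (b z)
      have h2 := hgnn z
      have h3 := abs_nonneg (min (a z) 0)
      simp only [Pi.add_apply, Pi.abs_apply]
      linarith
    · rw [abs_of_neg h0]
      have h1 : min (a z) 0 = a z := min_eq_left h0.le
      have h2 := abs_nonneg (b z)
      have h3 := hgnn z
      have h4 : |min (a z) 0| = -a z := by rw [h1, abs_of_neg h0]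
      simp only [Pi.add_apply, Pi.abs_apply]
      linarith
  have hle : ∫ z, a z ∂P ≤ ∫ z, b z ∂P := by
    have h1 : ∫ z, a z ∂P ≤ ∫ z, b z + (g z - 1) ∂P :=
      integral_mono_ae haint (hbint.add (hgint.sub (integrable_const 1))) hae
    have h2 : ∫ z, (b z + (g z - 1)) ∂P = ∫ z, b z ∂P + (∫ z, g z ∂P - 1) := by
      have hsub : Integrable (fun z ↦ g z - 1) P := hgint.sub (integrable_const 1)
      rw [integral_add hbint hsub, integral_sub hgint (integrable_const 1), integral_const]
      simp
    rw [h2] at h1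
    linarith
  have ham' : Measurable fun y ↦ Real.log (q y).toReal :=
    Real.measurable_log.comp hqm.ennreal_toReal
  have hIa : Integrable (fun y ↦ Real.log (q y).toReal) μ' := by
    rw [← hPsnd, Measure.snd]
    exact (integrable_map_measure ham'.aestronglyMeasurable measurable_snd.aemeasurable).mpr haint
  have hIaval : ∫ y, Real.log (q y).toReal ∂μ' = ∫ z, a z ∂P := by
    rw [← hPsnd, Measure.snd, integral_map measurable_snd.aemeasurable ham'.aestronglyMeasurable]
  have hbm' : Measurable fun x ↦ Real.log (p x).toReal :=
    Real.measurable_log.comp hpm.ennreal_toReal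
  have hIbval : ∫ x, Real.log (p x).toReal ∂μ = ∫ z, b z ∂P := by
    rw [← hPfst, Measure.fst, integral_map measurable_fst.aemeasurable
      hbm'.aestronglyMeasurable]
  calc klDiv μ' ν' = ENNReal.ofReal (∫ y, Real.log (q y).toReal ∂μ') := by
        simp only [klDiv]; exact if_pos ⟨hac', hIa⟩
    _ ≤ ENNReal.ofReal (∫ x, Real.log (p x).toReal ∂μ) :=
        ENNReal.ofReal_le_ofReal (by rw [hIaval, hIbval]; exact hle)
    _ = klDiv μ ν := by simp only [klDiv]; exact (if_pos ⟨hac, hint⟩).symm
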